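/- Let T be a bounded operator on a Hilbert space H such that T^k is an m-isometry on the range of T^k, and x₀ ∈ H. With β_ℓ(S,x) := (1/ℓ!) ∑_{j=0}^ℓ (-1)^{ℓ-j} C(ℓ,j)‖S^j x‖² and the norm ‖|p‖|²_k = ∑ₙ|pₙ|² + ∑_{n≥0}‖(L^{nk}p)(T)x₀‖² on polynomials, the multiplication operator M_z^k satisfies β_{ℓ+1}(M_z^k, p) = (1/(ℓ+1)) β_ℓ(T^k, T^k p(T)x₀) for all polynomials p and all ℓ ≥ 1; consequently β_{m+1}(M_z^k, p) = 0 for all p, i.e., M_z^k extends to an (m+1)-isometry. -/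

import Mathlib

open scoped BigOperators
open Polynomial Finset fwdDiff

/-- The squared norm `‖|p‖|²_k = ∑ₙ |pₙ|² + ∑_{n≥0} ‖(L^{nk} p)(T) x₀‖²`, where
`L` is the coefficient backward shift (i.e. `Polynomial.divX`). -/
noncomputable def polyNormSq {H : Type*} [NormedAddCommGroup H] [InnerProductSpace ℂ H]
    [CompleteSpace H] (k : ℕ) (T : H →L[ℂ] H) (x₀ : H) (p : Polynomial ℂ) : ℝ :=
  (∑' n : ℕ, ‖p.coeff n‖ ^ 2) +
    ∑' n : ℕ, ‖(Polynomial.aeval T (Polynomial.divX^[n * k] p)) x₀‖ ^ 2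

/-- The defect functional `β_ℓ(S, x) = (1/ℓ!) ∑_{j=0}^ℓ (-1)^{ℓ-j} C(ℓ,j) ‖S^j x‖²`. -/
noncomputable def beta {H : Type*} [NormedAddCommGroup H] [InnerProductSpace ℂ H]
    (l : ℕ) (S : H →L[ℂ] H) (x : H) : ℝ :=
  ((l.factorial : ℝ))⁻¹ * ∑ j ∈ Finset.range (l + 1),
    (-1 : ℝ) ^ (l - j) * (l.choose j) * ‖(S ^ j) x‖ ^ 2

/-- The defect functional of `M_z^k` on polynomials with the norm `‖|·‖|_k`:
`β_ℓ(M_z^k, p) = (1/ℓ!) ∑_{j=0}^ℓ (-1)^{ℓ-j} C(ℓ,j) ‖|(M_z^k)^j p‖|²_k`, where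
`(M_z^k)^j p = z^{kj} p`. -/
noncomputable def betaM {H : Type*} [NormedAddCommGroup H] [InnerProductSpace ℂ H]
    [CompleteSpace H] (l k : ℕ) (T : H →L[ℂ] H) (x₀ : H) (p : Polynomial ℂ) : ℝ :=
  ((l.factorial : ℝ))⁻¹ * ∑ j ∈ Finset.range (l + 1),
    (-1 : ℝ) ^ (l - j) * (l.choose j) * polyNormSq k T x₀ (Polynomial.X ^ (k * j) * p)

lemma coeff_divX_iter (q : Polynomial ℂ) (r n : ℕ) :
    (Polynomial.divX^[r] q).coeff n = q.coeff (n + r) := by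
  induction r generalizing q n with
  | zero => simp
  | succ r ih =>
      rw [Function.iterate_succ_apply, ih, Polynomial.coeff_divX]
      congr 1


lemma divX_iter_X_pow_mul (r : ℕ) (q : Polynomial ℂ) :
    Polynomial.divX^[r] (X ^ r * q) = q := by
  ext n
  rw [coeff_divX_iter, Polynomial.coeff_X_pow_mul]

lemma divX_iter_eq_zero (q : Polynomial ℂ) (r : ℕ) (h : q.natDegree < r) :
    Polynomial.divX^[r] q = 0 := by
  ext n
  rw [coeff_divX_iter, Polynomial.coeff_zero]
  exact Polynomial.coeff_eq_zero_of_natDegree_lt (by omega)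

lemma aeval_X_pow_mul {H : Type*} [NormedAddCommGroup H] [InnerProductSpace ℂ H]
    [CompleteSpace H] (T : H →L[ℂ] H) (x₀ : H) (p : Polynomial ℂ) (s : ℕ) :
    (Polynomial.aeval T (X ^ s * p)) x₀ = (T ^ s) ((Polynomial.aeval T p) x₀) := by
  rw [map_mul, Polynomial.aeval_X_pow]
  rfl

lemma keyA {H : Type*} [NormedAddCommGroup H] [InnerProductSpace ℂ H]
    [CompleteSpace H] (k : ℕ) (hk : 1 ≤ k) (T : H →L[ℂ] H) (x₀ : H) (p : Polynomial ℂ)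
    (j : ℕ) :
    polyNormSq k T x₀ (X ^ (k * j) * p) =
      polyNormSq k T x₀ p +
        ∑ i ∈ Finset.range j, ‖((T ^ k) ^ (i + 1)) ((Polynomial.aeval T p) x₀)‖ ^ 2 := by
  unfold polyNormSq
  have h1 : (∑' n : ℕ, ‖(X ^ (k * j) * p).coeff n‖ ^ 2) = ∑' n : ℕ, ‖p.coeff n‖ ^ 2 := by
    have hinj : Function.Injective (fun n : ℕ => n + k * j) := add_left_injective (k * j)
    rw [← hinj.tsum_eq]
    · refine tsum_congr fun n => ?_
      simp [Polynomial.coeff_X_pow_mul]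
    · intro n hn
      rcases le_or_gt (k * j) n with h | h
      · exact ⟨n - k * j, by show n - k * j + k * j = n; omega⟩
      · exfalso
        apply hn
        simp only [Function.mem_support, ne_eq, not_not] at *
        rw [Polynomial.coeff_X_pow_mul' p (k * j) n, if_neg (by omega)]
        simp
  rw [h1]
  -- second sums
  set y₀ := (Polynomial.aeval T p) x₀ with hy₀
  have hterm : ∀ n : ℕ,
      (Polynomial.aeval T (Polynomial.divX^[n * k] (X ^ (k * j) * p))) x₀ =
        if n < j then ((T ^ k) ^ (j - n)) y₀
        else (Polynomial.aeval T (Polynomial.divX^[(n - j) * k] p)) x₀ := by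
    intro n
    rcases lt_or_ge n j with h | h
    · rw [if_pos h]
      have hsplit : X ^ (k * j) * p = X ^ (n * k) * (X ^ (k * (j - n)) * p) := by
        rw [← mul_assoc, ← pow_add]
        congr 2
        have : n ≤ j := h.le
        rw [mul_comm n k, ← Nat.mul_add]
        congr 1
        omega
      rw [hsplit, divX_iter_X_pow_mul, aeval_X_pow_mul, pow_mul]
    · rw [if_neg (by omega)]
      have hsplit : n * k = (n - j) * k + j * k := by
        rw [← Nat.add_mul]; congr 1; omega
      rw [hsplit, Function.iterate_add_apply, mul_comm j k, divX_iter_X_pow_mul]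
  have hsummable : Summable
      (fun n : ℕ => ‖(Polynomial.aeval T (Polynomial.divX^[n * k] (X ^ (k * j) * p))) x₀‖ ^ 2) := by
    apply summable_of_ne_finset_zero (s := Finset.range ((X ^ (k * j) * p).natDegree + 1))
    intro n hn
    simp only [Finset.mem_range, not_lt] at hn
    rw [divX_iter_eq_zero _ _ (by nlinarith [Nat.le_mul_of_pos_right n hk])]
    simp
  rw [← Summable.sum_add_tsum_nat_add j hsummable]
  have h2 : (∑' n : ℕ,
      ‖(Polynomial.aeval T (Polynomial.divX^[(n + j) * k] (X ^ (k * j) * p))) x₀‖ ^ 2) =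
      ∑' n : ℕ, ‖(Polynomial.aeval T (Polynomial.divX^[n * k] p)) x₀‖ ^ 2 := by
    refine tsum_congr fun n => ?_
    rw [hterm (n + j), if_neg (by omega), Nat.add_sub_cancel]
  have h3 : (∑ n ∈ Finset.range j,
      ‖(Polynomial.aeval T (Polynomial.divX^[n * k] (X ^ (k * j) * p))) x₀‖ ^ 2) =
      ∑ i ∈ Finset.range j, ‖((T ^ k) ^ (i + 1)) y₀‖ ^ 2 := by
    rw [← Finset.sum_range_reflect (fun i => ‖((T ^ k) ^ (i + 1)) y₀‖ ^ 2) j]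
    refine Finset.sum_congr rfl fun n hn => ?_
    simp only [Finset.mem_range] at hn
    rw [hterm n, if_pos hn]
    have h' : j - n = j - 1 - n + 1 := by omega
    rw [h']
  rw [h2, h3]
  ring

lemma sum_eq_fwdDiff (g : ℕ → ℝ) (n : ℕ) :
    ∑ j ∈ Finset.range (n + 1), (-1 : ℝ) ^ (n - j) * (n.choose j) * g j =
      (Δ_[(1:ℕ)])^[n] g 0 := by
  rw [fwdDiff_iter_eq_sum_shift]
  refine Finset.sum_congr rfl fun j hj => ?_
  simp only [zsmul_eq_mul, smul_eq_mul, mul_one, zero_add]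
  push_cast
  ring

lemma main_identity {H : Type*} [NormedAddCommGroup H] [InnerProductSpace ℂ H]
    [CompleteSpace H] (k : ℕ) (hk : 1 ≤ k) (T : H →L[ℂ] H) (x₀ : H) (p : Polynomial ℂ)
    (l : ℕ) :
    betaM (l + 1) k T x₀ p =
      ((l : ℝ) + 1)⁻¹ * beta l (T ^ k) ((T ^ k) ((Polynomial.aeval T p) x₀)) := by
  set S := T ^ k with hS
  set y₀ := (Polynomial.aeval T p) x₀ with hy₀
  set f : ℕ → ℝ := fun j => polyNormSq k T x₀ (X ^ (k * j) * p) with hf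
  set a : ℕ → ℝ := fun i => ‖(S ^ i) (S y₀)‖ ^ 2 with ha
  have hdiff : Δ_[(1:ℕ)] f = a := by
    funext j
    show f (j + 1) - f j = a j
    rw [hf]
    simp only
    rw [keyA k hk T x₀ p (j + 1), keyA k hk T x₀ p j, Finset.sum_range_succ]
    have : ((S ^ (j + 1)) y₀) = (S ^ j) (S y₀) := by
      rw [pow_succ, ContinuousLinearMap.mul_apply]
    rw [ha]
    simp only
    rw [← this]
    ring
  have hfd : (Δ_[(1:ℕ)])^[l + 1] f 0 = (Δ_[(1:ℕ)])^[l] a 0 := by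
    rw [Function.iterate_succ_apply, hdiff]
  rw [betaM, beta, sum_eq_fwdDiff f (l + 1), sum_eq_fwdDiff a l, hfd,
    Nat.factorial_succ]
  push_cast
  rw [mul_inv]
  ring


theorem stmt19 {H : Type*} [NormedAddCommGroup H] [InnerProductSpace ℂ H] [CompleteSpace H]
    (m k : ℕ) (hm : 1 ≤ m) (hk : 1 ≤ k) (T : H →L[ℂ] H) (x₀ : H)
    (hT : ∀ y ∈ Set.range (⇑(T ^ k)), beta m (T ^ k) y = 0) :
    (∀ (p : Polynomial ℂ) (l : ℕ), 1 ≤ l →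
      betaM (l + 1) k T x₀ p =
        ((l : ℝ) + 1)⁻¹ * beta l (T ^ k) ((T ^ k) ((Polynomial.aeval T p) x₀))) ∧
    (∀ p : Polynomial ℂ, betaM (m + 1) k T x₀ p = 0) := by
  constructor
  · intro p l _
    exact main_identity k hk T x₀ p l
  · intro p
    rw [main_identity k hk T x₀ p m, hT _ ⟨_, rfl⟩, mul_zero]
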